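/- arXiv:1902.00734 — 4 statements merged into one kernel-verified Lean document; each statement's English description precedes it below -/
import Mathlib

section
/- For n i.i.d. real random variables X_1,...,X_n with common bounded density f, and bandwidths h_1,...,h_n > 0, the variance of the Wolverton-Wagner estimator f̂_n(x) = (1/n) Σ_{k=1}^n (1/h_k) K((X_k - x)/h_k) satisfies Var(f̂_n(x)) ≤ (‖f‖_∞ ‖K‖₂² / n²) Σ_{k=1}^n 1/h_k for every x ∈ ℝ. -/
open MeasureTheory ProbabilityTheory

private lemma variance_congr' {Ω : Type*} {mΩ : MeasurableSpace Ω} {μ : Measure Ω}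
    {X Y : Ω → ℝ} (h : X =ᵐ[μ] Y) : variance X μ = variance Y μ := by
  unfold ProbabilityTheory.variance ProbabilityTheory.evariance
  rw [integral_congr_ae h]
  congr 1
  refine lintegral_congr_ae (h.mono fun ω hω => ?_)
  simp only [hω]

/-- Variance bound for the Wolverton-Wagner estimator:
`Var(f̂_n(x)) ≤ ‖f‖_∞ ‖K‖₂² / n² * ∑ 1/h_k`. -/
theorem stmt_0
    {Ω : Type*} [MeasureSpace Ω] [IsProbabilityMeasure (ℙ : Measure Ω)]
    (n : ℕ) (hn : 0 < n)
    (X : Fin n → Ω → ℝ) (hXmeas : ∀ k, Measurable (X k))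
    (hindep : iIndepFun X ℙ)
    (f : ℝ → ℝ) (M : ℝ)
    (hf0 : ∀ y, 0 ≤ f y) (hfM : ∀ y, f y ≤ M)
    (hdens : ∀ k, Measure.map (X k) ℙ
      = volume.withDensity (fun y => ENNReal.ofReal (f y)))
    (K : ℝ → ℝ) (hK : MemLp K 2 volume)
    (h : Fin n → ℝ) (hh : ∀ k, 0 < h k) (x : ℝ) :
    variance (fun ω => (1 / (n : ℝ)) * ∑ k, (1 / h k) * K ((X k ω - x) / h k)) ℙ
      ≤ M * (∫ z, (K z) ^ 2) / (n : ℝ) ^ 2 * ∑ k, 1 / h k := by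
  have hM : 0 ≤ M := le_trans (hf0 0) (hfM 0)
  -- measurable representative of K
  set K' : ℝ → ℝ := hK.1.mk K with hK'def
  have hK'm : Measurable K' := hK.1.stronglyMeasurable_mk.measurable
  have hKK' : K =ᵐ[volume] K' := hK.1.ae_eq_mk
  have hK'2 : MemLp K' 2 volume := hK.ae_eq hKK'
  have hIeq : ∫ z, (K z) ^ 2 = ∫ z, (K' z) ^ 2 :=
    integral_congr_ae (hKK'.mono fun z hz => by simp only [hz])
  -- affine maps
  set φ : Fin n → ℝ → ℝ := fun k y => (y - x) / h k with hφdef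
  have hφm : ∀ k, Measurable (φ k) := fun k => (measurable_id.sub_const x).div_const _
  have hφmap : ∀ k, Measure.map (φ k) volume = ENNReal.ofReal (h k) • volume := by
    intro k
    have h0 : (h k)⁻¹ ≠ 0 := inv_ne_zero (hh k).ne'
    have : φ k = (fun y => y * (h k)⁻¹) ∘ (fun y => y - x) := by
      funext y; simp [hφdef, div_eq_mul_inv]
    have hm1 : Measurable fun y : ℝ => y * (h k)⁻¹ := by fun_prop
    have hm2 : Measurable fun y : ℝ => y - x := by fun_prop
    rw [this, ← Measure.map_map hm1 hm2,
      (measurePreserving_sub_right volume x).map_eq, Real.map_volume_mul_right h0,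
      inv_inv, abs_of_pos (hh k)]
  -- the modified kernels
  set g : Fin n → ℝ → ℝ := fun k y => (1 / h k) * K' ((y - x) / h k) with hgdef
  have hgm : ∀ k, Measurable (g k) := fun k => (hK'm.comp (hφm k)).const_mul _
  set Y : Fin n → Ω → ℝ := fun k => g k ∘ X k with hYdef
  -- quasi measure preserving: law of X k is abs cont wrt volume
  have hXqmp : ∀ k, Measure.QuasiMeasurePreserving (X k) ℙ volume := by
    intro k
    exact ⟨hXmeas k, by rw [hdens k]; exact withDensity_absolutelyContinuous _ _⟩
  have hφqmp : ∀ k, Measure.QuasiMeasurePreserving (φ k) volume volume := by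
    intro k
    refine ⟨hφm k, ?_⟩
    rw [hφmap k]
    exact Measure.smul_absolutelyContinuous
  -- a.e. equality of original and modified summands
  have hae : ∀ k : Fin n,
      (fun ω => (1 / h k) * K ((X k ω - x) / h k)) =ᵐ[ℙ] Y k := by
    intro k
    have hq : Measure.QuasiMeasurePreserving (fun ω => φ k (X k ω)) ℙ volume :=
      (hφqmp k).comp (hXqmp k)
    have := hq.ae_eq_comp hKK'
    filter_upwards [this] with ω hω
    simp only [Function.comp_apply] at hω
    simp only [hYdef, hgdef, Function.comp_apply]
    rw [show (X k ω - x) / h k = φ k (X k ω) from rfl, hω]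
  -- law comparison
  have hlawle : ∀ k, Measure.map (X k) ℙ ≤ ENNReal.ofReal M • volume := by
    intro k
    rw [hdens k, ← withDensity_const]
    exact withDensity_mono (Filter.Eventually.of_forall fun y =>
      ENNReal.ofReal_le_ofReal (hfM y))
  -- MemLp of g k wrt volume
  have hgL2vol : ∀ k, MemLp (g k) 2 volume := by
    intro k
    have h1 : MemLp K' 2 (Measure.map (φ k) volume) := by
      rw [hφmap k]
      exact hK'2.smul_measure ENNReal.ofReal_ne_top
    have h2 : MemLp (fun y => K' (φ k y)) 2 volume :=
      (memLp_map_measure_iff (hK'm.aestronglyMeasurable) (hφm k).aemeasurable).mp h1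
    exact h2.const_mul _
  -- MemLp of Y k
  have hYL2 : ∀ k, MemLp (Y k) 2 ℙ := by
    intro k
    have h1 : MemLp (g k) 2 (Measure.map (X k) ℙ) :=
      ((hgL2vol k).smul_measure (c := ENNReal.ofReal M) ENNReal.ofReal_ne_top).mono_measure
        (hlawle k)
    exact (memLp_map_measure_iff (hgm k).aestronglyMeasurable
      (hXmeas k).aemeasurable).mp h1
  -- independence of Y
  have hYindep : iIndepFun Y ℙ := hindep.comp g hgm
  -- variance bound for each Y k
  have hvar : ∀ k, variance (Y k) ℙ ≤ M * (∫ z, (K' z) ^ 2) * (1 / h k) := by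
    intro k
    have hle := variance_le_expectation_sq (hYL2 k).1
    refine hle.trans ?_
    -- compute / bound the second moment
    have hsq : (fun ω => (Y k ω) ^ 2) = (fun y => (g k y) ^ 2) ∘ (X k) := rfl
    have e1 : ℙ[(Y k) ^ 2] = ∫ y, (g k y) ^ 2 ∂(Measure.map (X k) ℙ) := by
      rw [integral_map (hXmeas k).aemeasurable]
      · rfl
      · exact ((hgm k).pow_const 2).aestronglyMeasurable
    rw [e1]
    have hint : Integrable (fun y => (g k y) ^ 2) (ENNReal.ofReal M • volume) := by
      have := (hgL2vol k).integrable_sq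
      have h2 : Integrable (fun y => (g k y) ^ 2) volume := by
        simpa [pow_two] using this
      exact h2.smul_measure ENNReal.ofReal_ne_top
    have e2 : ∫ y, (g k y) ^ 2 ∂(Measure.map (X k) ℙ)
        ≤ ∫ y, (g k y) ^ 2 ∂(ENNReal.ofReal M • volume) := by
      refine integral_mono_measure (hlawle k) ?_ hint
      exact Filter.Eventually.of_forall fun y => sq_nonneg _
    refine e2.trans_eq ?_
    rw [integral_smul_measure, ENNReal.toReal_ofReal hM]
    have e3 : ∫ y, (g k y) ^ 2 = (1 / h k) ^ 2 * ∫ y, (K' ((y - x) / h k)) ^ 2 := by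
      simp_rw [hgdef, mul_pow]
      rw [integral_const_mul]
    have e4 : ∫ y, (K' ((y - x) / h k)) ^ 2 = h k * ∫ z, (K' z) ^ 2 := by
      calc ∫ y, (K' ((y - x) / h k)) ^ 2
          = ∫ y, (fun t => (K' (t / h k)) ^ 2) (y - x) := rfl
        _ = ∫ t, (K' (t / h k)) ^ 2 := integral_sub_right_eq_self (μ := volume) (fun t => K' (t / h k) ^ 2) x
        _ = |h k| • ∫ z, (K' z) ^ 2 :=
            MeasureTheory.Measure.integral_comp_div (fun z => (K' z) ^ 2) (h k)
        _ = h k * ∫ z, (K' z) ^ 2 := by rw [abs_of_pos (hh k), smul_eq_mul]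
    have hk0 : (h k : ℝ) ≠ 0 := (hh k).ne'
    rw [e3, e4, smul_eq_mul]
    field_simp
  -- assemble
  have hsumfun : (fun ω => (1 / (n : ℝ)) * ∑ k, (1 / h k) * K ((X k ω - x) / h k))
      =ᵐ[ℙ] fun ω => (1 / (n : ℝ)) * ∑ k, Y k ω := by
    have : ∀ᵐ ω ∂ℙ, ∀ k : Fin n, (1 / h k) * K ((X k ω - x) / h k) = Y k ω := by
      rw [MeasureTheory.ae_all_iff]
      exact fun k => hae k
    filter_upwards [this] with ω hω
    congr 1
    exact Finset.sum_congr rfl fun k _ => hω k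
  rw [variance_congr' hsumfun]
  have e5 : variance (fun ω => (1 / (n : ℝ)) * ∑ k, Y k ω) ℙ
      = (1 / (n : ℝ)) ^ 2 * variance (∑ k, Y k) ℙ := by
    rw [variance_const_mul]
    congr 1
    apply variance_congr'
    refine Filter.Eventually.of_forall fun ω => ?_
    simp [Finset.sum_apply]
  rw [e5]
  have e6 : variance (∑ k, Y k) ℙ = ∑ k, variance (Y k) ℙ := by
    refine IndepFun.variance_sum (fun k _ => hYL2 k) ?_
    intro i _ j _ hij
    exact hYindep.indepFun hij
  rw [e6]
  calc (1 / (n : ℝ)) ^ 2 * ∑ k, variance (Y k) ℙ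
      ≤ (1 / (n : ℝ)) ^ 2 * ∑ k, M * (∫ z, (K' z) ^ 2) * (1 / h k) := by
        refine mul_le_mul_of_nonneg_left ?_ (sq_nonneg _)
        exact Finset.sum_le_sum fun k _ => hvar k
    _ = M * (∫ z, (K z) ^ 2) / (n : ℝ) ^ 2 * ∑ k, 1 / h k := by
        rw [hIeq, ← Finset.mul_sum]
        field_simp
        try ring
end

section
/- Let f be a density whose ℓ-th derivative exists (ℓ = ⌊β⌋) and is (β−ℓ)-Hölder with constant L, and let K be a kernel of order ℓ with ∫|z|^β |K(z)| dz < ∞. Then the bias of the Wolverton-Wagner estimator satisfies |E(f̂_n(x)) − f(x)| ≤ (L ∫|z|^β |K(z)| dz / ℓ!) · (1/n) Σ_{k=1}^n h_k^β for all x. -/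
open MeasureTheory Real

open Set
open scoped Nat

lemma iterEq {f : ℝ → ℝ} {ℓ i : ℕ} (hf : ContDiff ℝ ℓ f) (hi : i ≤ ℓ)
    {s : Set ℝ} (hs : UniqueDiffOn ℝ s) {y : ℝ} (hy : y ∈ s) :
    iteratedDerivWithin i f s y = iteratedDeriv i f y := by
  have H := ((contDiff_iff_ftaylorSeries.mp hf).hasFTaylorSeriesUpToOn
      s).eq_iteratedFDerivWithin_of_uniqueDiffOn (by exact_mod_cast hi) hs hy
  rw [iteratedDerivWithin_eq_iteratedFDerivWithin, iteratedDeriv_eq_iteratedFDeriv, ← H]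
  rfl

lemma lagr_pos {f : ℝ → ℝ} {ℓ : ℕ} (hℓ : 1 ≤ ℓ) (hf : ContDiff ℝ ℓ f)
    (a u : ℝ) (hu : 0 < u) :
    ∃ ξ, |ξ - a| ≤ |u| ∧
      f (a + u) - ∑ i ∈ Finset.range ℓ, (i ! : ℝ)⁻¹ * u ^ i * iteratedDeriv i f a
        = iteratedDeriv ℓ f ξ * u ^ ℓ / (ℓ ! : ℝ) := by
  obtain ⟨m, rfl⟩ : ∃ m, ℓ = m + 1 := ⟨ℓ - 1, by omega⟩
  have hab : a < a + u := lt_add_of_pos_right a hu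
  have hs := uniqueDiffOn_Icc hab
  have hfO : ContDiffOn ℝ m f (Icc a (a + u)) :=
    (hf.of_le (by exact_mod_cast Nat.le_succ m)).contDiffOn
  have hdm : Differentiable ℝ (iteratedDeriv m f) :=
    hf.differentiable_iteratedDeriv m (by exact_mod_cast Nat.lt_succ_self m)
  have hdiff : DifferentiableOn ℝ (iteratedDerivWithin m f (Icc a (a + u))) (Ioo a (a + u)) := by
    apply (hdm.differentiableOn).congr
    intro y hy
    exact iterEq hf (Nat.le_succ m) hs (Ioo_subset_Icc_self hy)
  have hT := taylor_mean_remainder_lagrange hab.ne (by rwa [uIcc_of_le hab.le])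
    (by rwa [uIcc_of_le hab.le, uIoo_of_le hab.le])
  rw [uIcc_of_le hab.le, uIoo_of_le hab.le] at hT
  obtain ⟨ξ, hξ, hres⟩ := hT
  refine ⟨ξ, ?_, ?_⟩
  · rw [abs_of_pos hu, abs_le]
    exact ⟨by linarith [hξ.1], by linarith [hξ.2]⟩
  · rw [taylor_within_apply] at hres
    have h1 : iteratedDerivWithin (m + 1) f (Icc a (a + u)) ξ = iteratedDeriv (m + 1) f ξ :=
      iterEq hf le_rfl hs (Ioo_subset_Icc_self hξ)
    rw [h1] at hres
    have h2 : ∀ i ∈ Finset.range (m + 1),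
        ((i ! : ℝ)⁻¹ * (a + u - a) ^ i) • iteratedDerivWithin i f (Icc a (a + u)) a
          = (i ! : ℝ)⁻¹ * u ^ i * iteratedDeriv i f a := by
      intro i hi
      have hi' : i < m + 1 := Finset.mem_range.mp hi
      rw [iterEq hf (by omega : i ≤ m + 1) hs (left_mem_Icc.2 hab.le)]
      simp only [smul_eq_mul, add_sub_cancel_left]
    rw [Finset.sum_congr rfl h2] at hres
    simpa using hres

lemma lagr {f : ℝ → ℝ} {ℓ : ℕ} (hℓ : 1 ≤ ℓ) (hf : ContDiff ℝ ℓ f)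
    (a u : ℝ) (hu : u ≠ 0) :
    ∃ ξ, |ξ - a| ≤ |u| ∧
      f (a + u) - ∑ i ∈ Finset.range ℓ, (i ! : ℝ)⁻¹ * u ^ i * iteratedDeriv i f a
        = iteratedDeriv ℓ f ξ * u ^ ℓ / (ℓ ! : ℝ) := by
  rcases hu.lt_or_gt with hneg | hpos
  · -- u < 0 : apply lagr_pos to g t = f (-t)
    have hg : ContDiff ℝ ℓ (fun t => f (-t)) := hf.comp contDiff_neg
    obtain ⟨ξ, hξ1, hξ2⟩ := lagr_pos hℓ hg (-a) (-u) (by linarith)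
    have hder : ∀ (i : ℕ) (y : ℝ),
        iteratedDeriv i (fun t => f (-t)) y = (-1) ^ i * iteratedDeriv i f (-y) := by
      intro i y
      rw [iteratedDeriv_comp_neg]
      simp [smul_eq_mul]
    refine ⟨-ξ, ?_, ?_⟩
    · have : |(-ξ) - a| = |ξ - (-a)| := by rw [← abs_neg]; ring_nf
      rw [this, ← abs_neg u]; exact hξ1
    · have e1 : (-a) + (-u) = -(a + u) := by ring
      rw [e1, hder] at hξ2
      have e2 : ∀ i ∈ Finset.range ℓ,
          (i ! : ℝ)⁻¹ * (-u) ^ i * iteratedDeriv i (fun t => f (-t)) (-a)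
            = (i ! : ℝ)⁻¹ * u ^ i * iteratedDeriv i f a := by
        intro i _
        have hsq : ((-1:ℝ)) ^ i * ((-1:ℝ)) ^ i = 1 := by
          rw [← pow_add]; exact Even.neg_one_pow ⟨i, rfl⟩
        rw [hder, neg_neg, neg_pow u i]
        calc (i ! : ℝ)⁻¹ * ((-1) ^ i * u ^ i) * ((-1) ^ i * iteratedDeriv i f a)
            = (((-1:ℝ)) ^ i * ((-1:ℝ)) ^ i) * ((i ! : ℝ)⁻¹ * u ^ i * iteratedDeriv i f a) := by
              ring
          _ = (i ! : ℝ)⁻¹ * u ^ i * iteratedDeriv i f a := by rw [hsq, one_mul]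
      rw [Finset.sum_congr rfl e2, neg_neg] at hξ2
      have hsq : ((-1:ℝ)) ^ ℓ * ((-1:ℝ)) ^ ℓ = 1 := by
        rw [← pow_add]; exact Even.neg_one_pow ⟨ℓ, rfl⟩
      rw [hξ2, neg_pow u ℓ]
      rw [show (-1:ℝ) ^ ℓ * iteratedDeriv ℓ f (-ξ) * ((-1) ^ ℓ * u ^ ℓ)
            = (((-1:ℝ)) ^ ℓ * ((-1:ℝ)) ^ ℓ) * (iteratedDeriv ℓ f (-ξ) * u ^ ℓ) from by ring,
        hsq, one_mul]
  · exact lagr_pos hℓ hf a u hpos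

lemma taylor_bound {β L : ℝ} (hβ : 0 < β) (hL : 0 ≤ L) {ℓ : ℕ} (hℓβ : (ℓ : ℝ) ≤ β)
    {f : ℝ → ℝ} (hf : ContDiff ℝ ℓ f)
    (hH : ∀ x y : ℝ, |iteratedDeriv ℓ f y - iteratedDeriv ℓ f x| ≤ L * |y - x| ^ (β - ℓ))
    (a u : ℝ) :
    |f (a + u) - ∑ i ∈ Finset.range (ℓ + 1), (i ! : ℝ)⁻¹ * u ^ i * iteratedDeriv i f a|
      ≤ L * |u| ^ β / (ℓ ! : ℝ) := by
  rcases eq_or_ne u 0 with rfl | hu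
  · have hsum : ∑ i ∈ Finset.range (ℓ + 1), (i ! : ℝ)⁻¹ * (0:ℝ) ^ i * iteratedDeriv i f a
        = f a := by
      rw [Finset.sum_eq_single_of_mem 0 (Finset.mem_range.mpr (Nat.succ_pos ℓ))]
      · simp
      · intro b _ hb
        simp [zero_pow hb]
    rw [hsum, add_zero, sub_self, abs_zero, Real.zero_rpow hβ.ne', mul_zero, zero_div]
  · by_cases hl0 : ℓ = 0
    · subst hl0
      simp only [zero_add, Finset.range_one, Finset.sum_singleton, Nat.factorial_zero, Nat.cast_one,
        inv_one, pow_zero, one_mul, iteratedDeriv_zero, div_one]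
      have := hH a (a + u)
      simp only [iteratedDeriv_zero, add_sub_cancel_left, Nat.cast_zero, sub_zero] at this
      exact this
    · have h1 : 1 ≤ ℓ := Nat.one_le_iff_ne_zero.mpr hl0
      obtain ⟨ξ, hξ1, hξ2⟩ := lagr h1 hf a u hu
      have split : f (a + u)
            - ∑ i ∈ Finset.range (ℓ + 1), (i ! : ℝ)⁻¹ * u ^ i * iteratedDeriv i f a
          = (f (a + u) - ∑ i ∈ Finset.range ℓ, (i ! : ℝ)⁻¹ * u ^ i * iteratedDeriv i f a)
            - (ℓ ! : ℝ)⁻¹ * u ^ ℓ * iteratedDeriv ℓ f a := by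
        rw [Finset.sum_range_succ]; ring
      have hfac : (0:ℝ) < (ℓ ! : ℝ) := by exact_mod_cast Nat.factorial_pos ℓ
      have hΔ : |iteratedDeriv ℓ f ξ - iteratedDeriv ℓ f a| ≤ L * |u| ^ (β - ℓ) := by
        refine (hH a ξ).trans ?_
        exact mul_le_mul_of_nonneg_left
          (Real.rpow_le_rpow (abs_nonneg _) hξ1 (by linarith)) hL
      have key : iteratedDeriv ℓ f ξ * u ^ ℓ / (ℓ ! : ℝ)
            - (ℓ ! : ℝ)⁻¹ * u ^ ℓ * iteratedDeriv ℓ f a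
          = (iteratedDeriv ℓ f ξ - iteratedDeriv ℓ f a) * u ^ ℓ / (ℓ ! : ℝ) := by
        ring
      rw [split, hξ2, key, abs_div, abs_mul, abs_of_pos hfac, abs_pow]
      calc |iteratedDeriv ℓ f ξ - iteratedDeriv ℓ f a| * |u| ^ ℓ / (ℓ ! : ℝ)
          ≤ (L * |u| ^ (β - ℓ)) * |u| ^ ℓ / (ℓ ! : ℝ) := by gcongr
        _ = L * |u| ^ β / (ℓ ! : ℝ) := by
            rw [mul_assoc, ← Real.rpow_natCast |u| ℓ,
              ← Real.rpow_add (abs_pos.mpr hu), sub_add_cancel]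

open MeasureTheory in
lemma bias_k {β L : ℝ} (hβ : 0 < β) (hL : 0 ≤ L) {ℓ : ℕ} (hℓβ : (ℓ : ℝ) ≤ β)
    {f K : ℝ → ℝ} (hf : ContDiff ℝ ℓ f)
    (hH : ∀ x y : ℝ, |iteratedDeriv ℓ f y - iteratedDeriv ℓ f x| ≤ L * |y - x| ^ (β - ℓ))
    (hKint : Integrable K) (hK1 : ∫ z, K z = 1)
    (hKmom_int : ∀ i : ℕ, i ≤ ℓ → Integrable (fun z => |z| ^ i * |K z|))
    (hKmom : ∀ i : ℕ, 1 ≤ i → i ≤ ℓ → ∫ z, z ^ i * K z = 0)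
    (hKβ : Integrable (fun z => |z| ^ β * |K z|))
    {hk : ℝ} (hhk : 0 < hk) (x : ℝ)
    (hfint : Integrable (fun z => K z * f (hk * z + x))) :
    |(∫ z, K z * f (hk * z + x)) - f x|
      ≤ (L * ∫ z, |z| ^ β * |K z|) / (ℓ ! : ℝ) * hk ^ β := by
  have hZi : ∀ i : ℕ, i ≤ ℓ → Integrable (fun z => z ^ i * K z) := by
    intro i hi
    refine (hKmom_int i hi).mono' ((continuous_pow i).aestronglyMeasurable.mul hKint.1) ?_
    filter_upwards with z
    rw [Real.norm_eq_abs, abs_mul, abs_pow]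
  set S : ℝ → ℝ := fun z => ∑ i ∈ Finset.range (ℓ + 1),
    (i ! : ℝ)⁻¹ * (hk * z) ^ i * iteratedDeriv i f x with hS
  have hSform : (fun z => K z * S z) = fun z => ∑ i ∈ Finset.range (ℓ + 1),
      ((i ! : ℝ)⁻¹ * hk ^ i * iteratedDeriv i f x) * (z ^ i * K z) := by
    funext z
    rw [hS, Finset.mul_sum]
    refine Finset.sum_congr rfl fun i _ => ?_
    rw [mul_pow]; ring
  have g_int : Integrable (fun z => K z * S z) := by
    rw [hSform]
    exact integrable_finset_sum _ fun i hi =>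
      (hZi i (Nat.lt_succ_iff.mp (Finset.mem_range.mp hi))).const_mul _
  have hKS : ∫ z, K z * S z = f x := by
    rw [hSform, integral_finset_sum _ fun i hi =>
      (hZi i (Nat.lt_succ_iff.mp (Finset.mem_range.mp hi))).const_mul _]
    rw [Finset.sum_eq_single_of_mem 0 (Finset.mem_range.mpr (Nat.succ_pos ℓ))]
    · simp only [pow_zero, one_mul, Nat.factorial_zero, Nat.cast_one, inv_one,
        iteratedDeriv_zero, integral_const_mul, hK1, mul_one]
    · intro i hi hi0
      rw [integral_const_mul, hKmom i (Nat.one_le_iff_ne_zero.mpr hi0)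
        (Nat.lt_succ_iff.mp (Finset.mem_range.mp hi)), mul_zero]
  have hdiff : (∫ z, K z * f (hk * z + x)) - f x
      = ∫ z, K z * (f (hk * z + x) - S z) := by
    rw [← hKS, ← integral_sub hfint g_int]
    congr 1; funext z; ring
  have hmaj : Integrable (fun z => L * hk ^ β / (ℓ ! : ℝ) * (|z| ^ β * |K z|)) :=
    hKβ.const_mul _
  have hptwise : ∀ z, |K z * (f (hk * z + x) - S z)|
      ≤ L * hk ^ β / (ℓ ! : ℝ) * (|z| ^ β * |K z|) := by
    intro z
    rw [abs_mul]
    have hb := taylor_bound hβ hL hℓβ hf hH x (hk * z)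
    rw [add_comm x (hk * z)] at hb
    have : |K z| * |f (hk * z + x) - S z| ≤ |K z| * (L * |hk * z| ^ β / (ℓ ! : ℝ)) :=
      mul_le_mul_of_nonneg_left hb (abs_nonneg _)
    refine this.trans (le_of_eq ?_)
    rw [abs_mul, abs_of_pos hhk, Real.mul_rpow hhk.le (abs_nonneg z)]
    ring
  rw [hdiff]
  have h1 : |∫ z, K z * (f (hk * z + x) - S z)| ≤ ∫ z, |K z * (f (hk * z + x) - S z)| := by
    simpa only [Real.norm_eq_abs] using
      norm_integral_le_integral_norm (fun z => K z * (f (hk * z + x) - S z))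
  refine h1.trans ?_
  have hGint : Integrable (fun z => K z * (f (hk * z + x) - S z)) :=
    (hfint.sub g_int).congr (by filter_upwards with z; simp only [Pi.sub_apply]; ring)
  have h2 : ∫ z, |K z * (f (hk * z + x) - S z)|
      ≤ ∫ z, L * hk ^ β / (ℓ ! : ℝ) * (|z| ^ β * |K z|) :=
    integral_mono hGint.abs hmaj hptwise
  refine h2.trans (le_of_eq ?_)
  rw [integral_const_mul]
  ring

/-- Bias bound for the Wolverton-Wagner estimator for `f` in the Hölder class
`Σ(β,L)`: `|E(f̂_n(x)) − f(x)| ≤ (L C_β(K)/ℓ!) (1/n) ∑ h_k^β`, where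
`E(f̂_n)(x) = (1/n) ∑_k ∫ K(z) f(h_k z + x) dz`. -/
theorem stmt_1
    (β L : ℝ) (hβ : 0 < β) (hL : 0 < L)
    (ℓ : ℕ) (hℓ : ℓ = ⌊β⌋₊)
    (f : ℝ → ℝ) (hf_smooth : ContDiff ℝ ℓ f)
    (hf_holder : ∀ x y : ℝ,
      |iteratedDeriv ℓ f y - iteratedDeriv ℓ f x| ≤ L * |y - x| ^ (β - ℓ))
    (K : ℝ → ℝ) (hKint : Integrable K)
    (hK1 : ∫ z, K z = 1)
    (hKmom_int : ∀ i : ℕ, i ≤ ℓ → Integrable (fun z => |z| ^ i * |K z|))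
    (hKmom : ∀ i : ℕ, 1 ≤ i → i ≤ ℓ → ∫ z, z ^ i * K z = 0)
    (hKβ : Integrable (fun z => |z| ^ β * |K z|))
    (n : ℕ) (hn : 0 < n)
    (h : Fin n → ℝ) (hh : ∀ k, 0 < h k)
    (hfint : ∀ (k : Fin n) (x : ℝ), Integrable (fun z => K z * f (h k * z + x)))
    (x : ℝ) :
    |(1 / (n : ℝ)) * (∑ k, ∫ z, K z * f (h k * z + x)) - f x|
      ≤ (L * ∫ z, |z| ^ β * |K z|) / (Nat.factorial ℓ : ℝ)
          * ((1 / (n : ℝ)) * ∑ k, h k ^ β) := by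
  have hℓβ : (ℓ : ℝ) ≤ β := by rw [hℓ]; exact Nat.floor_le hβ.le
  set c : ℝ := (L * ∫ z, |z| ^ β * |K z|) / (Nat.factorial ℓ : ℝ) with hc
  have hC : 0 ≤ ∫ z, |z| ^ β * |K z| := integral_nonneg fun z => by positivity
  have hc0 : 0 ≤ c := by
    apply div_nonneg (mul_nonneg hL.le hC)
    positivity
  have hbk : ∀ k : Fin n, |(∫ z, K z * f (h k * z + x)) - f x| ≤ c * h k ^ β := fun k =>
    bias_k hβ hL.le hℓβ hf_smooth hf_holder hKint hK1 hKmom_int hKmom hKβ (hh k) x (hfint k x)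
  have hn' : (n : ℝ) ≠ 0 := Nat.cast_ne_zero.mpr hn.ne'
  have e : (1 / (n : ℝ)) * (∑ k, ∫ z, K z * f (h k * z + x)) - f x
      = (1 / (n : ℝ)) * ∑ k : Fin n, ((∫ z, K z * f (h k * z + x)) - f x) := by
    rw [Finset.sum_sub_distrib, Finset.sum_const, Finset.card_univ, Fintype.card_fin,
      nsmul_eq_mul, mul_sub]
    field_simp
  rw [e, abs_mul, abs_of_nonneg (by positivity : (0:ℝ) ≤ 1 / (n:ℝ))]
  calc (1 / (n : ℝ)) * |∑ k : Fin n, ((∫ z, K z * f (h k * z + x)) - f x)|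
      ≤ (1 / (n : ℝ)) * ∑ k : Fin n, |(∫ z, K z * f (h k * z + x)) - f x| := by
        gcongr
        exact Finset.abs_sum_le_sum_abs _ _
    _ ≤ (1 / (n : ℝ)) * ∑ k : Fin n, c * h k ^ β := by
        gcongr with k
        exact hbk k
    _ = c * ((1 / (n : ℝ)) * ∑ k, h k ^ β) := by
        rw [← Finset.mul_sum]; ring
end

section
/- Under the assumptions that K is a kernel of order ℓ = ⌊β⌋ with ∫|z|^β|K(z)|dz = C_β(K) < ∞ and ‖K‖₂ < ∞, and f ∈ Σ(β,L) is a bounded density, there exists a constant c > 0 depending only on β, L, ‖K‖₂ and C_β(K) such that for all x, E(|f̂_{n,h}(x) − f(x)|²) ≤ (c/n²)( |Σ_{k=1}^n h_k^β/ℓ!|² + Σ_{k=1}^n 1/h_k ). -/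
open MeasureTheory Real ProbabilityTheory
open Finset
open scoped ENNReal NNReal


theorem my_taylor_bound (m : ℕ) (γ A : ℝ) (hγ : 0 ≤ γ) (hA : 0 ≤ A) :
    ∀ g : ℝ → ℝ, ContDiff ℝ m g →
    (∀ u : ℝ, |iteratedDeriv m g u - iteratedDeriv m g 0| ≤ A * |u| ^ γ) →
    ∀ u : ℝ, |g u - ∑ i ∈ range (m + 1), iteratedDeriv i g 0 * u ^ i / (Nat.factorial i : ℝ)|
      ≤ A * |u| ^ (γ + m) := by
  induction m with
  | zero =>
    intro g hg hH u
    simpa using hH u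
  | succ m IH =>
    intro g hg hH u
    have hgd : Differentiable ℝ g := by
      have hg2 : ContDiff ℝ ((m : WithTop ℕ∞) + 1) g := by exact_mod_cast hg
      exact (contDiff_succ_iff_deriv.mp hg2).1
    have hg' : ContDiff ℝ m (deriv g) := by
      have hg2 : ContDiff ℝ ((m : WithTop ℕ∞) + 1) g := by exact_mod_cast hg
      exact (contDiff_succ_iff_deriv.mp hg2).2.2
    have hiter : ∀ i : ℕ, iteratedDeriv i (deriv g) = iteratedDeriv (i + 1) g := by
      intro i; rw [iteratedDeriv_succ']
    have hH' : ∀ u : ℝ, |iteratedDeriv m (deriv g) u - iteratedDeriv m (deriv g) 0|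
        ≤ A * |u| ^ γ := by
      intro u; rw [hiter]; exact hH u
    have IH' := IH (deriv g) hg' hH'
    -- define remainder G
    set G : ℝ → ℝ := fun u => g u - ∑ i ∈ range (m + 2),
      iteratedDeriv i g 0 * u ^ i / (Nat.factorial i : ℝ) with hG
    have hGderiv : ∀ t : ℝ, HasDerivAt G
        (deriv g t - ∑ i ∈ range (m + 1),
          iteratedDeriv i (deriv g) 0 * t ^ i / (Nat.factorial i : ℝ)) t := by
      intro t
      have h1 : HasDerivAt (fun u : ℝ => ∑ i ∈ range (m + 2),
          iteratedDeriv i g 0 * u ^ i / (Nat.factorial i : ℝ))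
          (∑ i ∈ range (m + 2),
            iteratedDeriv i g 0 * ((i : ℝ) * t ^ (i - 1)) / (Nat.factorial i : ℝ)) t := by
        apply HasDerivAt.fun_sum
        intro i _
        have : HasDerivAt (fun u : ℝ => u ^ i) ((i : ℝ) * t ^ (i - 1)) t := hasDerivAt_pow i t
        simpa [mul_div_assoc] using (this.const_mul (iteratedDeriv i g 0)).div_const _
      have h2 : ∑ i ∈ range (m + 2),
            iteratedDeriv i g 0 * ((i : ℝ) * t ^ (i - 1)) / (Nat.factorial i : ℝ)
          = ∑ i ∈ range (m + 1),
            iteratedDeriv i (deriv g) 0 * t ^ i / (Nat.factorial i : ℝ) := by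
        rw [Finset.sum_range_succ'] 
        simp only [hiter]
        have : ∀ i ∈ range (m + 1),
            iteratedDeriv (i + 1) g 0 * ((i + 1 : ℕ) : ℝ) * t ^ (i + 1 - 1)
              / (Nat.factorial (i + 1) : ℝ)
            = iteratedDeriv (i + 1) g 0 * t ^ i / (Nat.factorial i : ℝ) := by
          intro i _
          rw [Nat.factorial_succ]
          push_cast
          field_simp
        simp only [Nat.cast_zero, zero_mul, mul_zero, zero_div, add_zero]
        refine Finset.sum_congr rfl fun i hi => ?_
        rw [← this i hi]
        push_cast
        ring
      rw [← h2]
      exact ((hgd t).hasDerivAt).sub h1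
    have hG0 : G 0 = 0 := by
      simp only [hG]
      rw [Finset.sum_range_succ'] 
      simp [Nat.factorial]
    have key : |G u| ≤ (A * |u| ^ (γ + m)) * |u| := by
      have hconv : Convex ℝ (Set.uIcc (0:ℝ) u) := convex_uIcc 0 u
      have := hconv.norm_image_sub_le_of_norm_hasDerivWithin_le
        (f := G) (f' := fun t => deriv g t - ∑ i ∈ range (m + 1),
          iteratedDeriv i (deriv g) 0 * t ^ i / (Nat.factorial i : ℝ))
        (fun t _ => (hGderiv t).hasDerivWithinAt)
        (fun t ht => by
          have h1 : |t| ≤ |u| := by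
            rcases Set.mem_uIcc.mp ht with h | h
            · rw [abs_of_nonneg h.1]; exact le_trans h.2 (le_abs_self u)
            · rw [abs_of_nonpos h.2]; exact le_trans (neg_le_neg h.1) (neg_le_abs u)
          calc ‖deriv g t - ∑ i ∈ range (m + 1),
              iteratedDeriv i (deriv g) 0 * t ^ i / (Nat.factorial i : ℝ)‖
              ≤ A * |t| ^ (γ + m) := IH' t
            _ ≤ A * |u| ^ (γ + m) := by
                apply mul_le_mul_of_nonneg_left _ hA
                exact Real.rpow_le_rpow (abs_nonneg t) h1 (by positivity))
        (Set.left_mem_uIcc) (Set.right_mem_uIcc)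
      simpa [hG0] using this
    have : (A * |u| ^ (γ + m)) * |u| = A * |u| ^ (γ + (m + 1)) := by
      rcases eq_or_ne u 0 with rfl | hu
      · have hpos : (0:ℝ) < γ + ((m:ℝ) + 1) := by positivity
        simp [Real.zero_rpow hpos.ne']
      · rw [mul_assoc, ← Real.rpow_add_one (abs_ne_zero.mpr hu)]
        ring_nf
    calc |g u - ∑ i ∈ range (m + 1 + 1),
        iteratedDeriv i g 0 * u ^ i / (Nat.factorial i : ℝ)| = |G u| := rfl
      _ ≤ (A * |u| ^ (γ + m)) * |u| := key
      _ = A * |u| ^ (γ + (m + 1)) := this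
      _ = A * |u| ^ (γ + ((m : ℕ) + 1 : ℕ)) := by push_cast; ring_nf

theorem bias_key (β L : ℝ) (hβ : 0 < β) (hL : 0 < L) (ℓ : ℕ) (hℓ : ℓ = ⌊β⌋₊)
    (f : ℝ → ℝ) (hf_smooth : ContDiff ℝ ℓ f)
    (hf_holder : ∀ x y : ℝ,
      |iteratedDeriv ℓ f y - iteratedDeriv ℓ f x| ≤ L * |y - x| ^ (β - ℓ))
    (K : ℝ → ℝ) (hKint : Integrable K)
    (hKmom_int : ∀ i : ℕ, i ≤ ℓ → Integrable (fun z => |z| ^ i * |K z|))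
    (hKmom : ∀ i : ℕ, 1 ≤ i → i ≤ ℓ → ∫ z, z ^ i * K z = 0)
    (hKβ : Integrable (fun z => |z| ^ β * |K z|))
    (x h : ℝ) (hh : 0 < h) :
    Integrable (fun z => K z * (f (x + h * z) - f x)) ∧
    |∫ z, K z * (f (x + h * z) - f x)|
      ≤ L * (∫ z, |z| ^ β * |K z|) * h ^ β := by
  have hβℓ : (ℓ : ℝ) ≤ β := by rw [hℓ]; exact_mod_cast Nat.floor_le hβ.le
  have hγ : 0 ≤ β - ℓ := by linarith
  set g : ℝ → ℝ := fun u => f (x + u) with hgdef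
  have hg_smooth : ContDiff ℝ ℓ g :=
    hf_smooth.comp (contDiff_const.add contDiff_id)
  have hiterg : ∀ i : ℕ, ∀ u : ℝ, iteratedDeriv i g u = iteratedDeriv i f (x + u) := by
    intro i u
    exact congrFun (iteratedDeriv_comp_const_add i f x) u
  have hgH : ∀ u : ℝ, |iteratedDeriv ℓ g u - iteratedDeriv ℓ g 0| ≤ L * |u| ^ (β - ℓ) := by
    intro u
    rw [hiterg, hiterg]
    have := hf_holder (x + 0) (x + u)
    simpa using this
  set R : ℝ → ℝ := fun u => g u - ∑ i ∈ range (ℓ + 1),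
      iteratedDeriv i g 0 * u ^ i / (Nat.factorial i : ℝ) with hRdef
  have hR : ∀ u : ℝ, |R u| ≤ L * |u| ^ β := by
    intro u
    have := my_taylor_bound ℓ (β - ℓ) L hγ hL.le g hg_smooth hgH u
    rwa [sub_add_cancel] at this
  have hRcont : Continuous R := by
    apply Continuous.sub
    · exact hf_smooth.continuous.comp (continuous_const.add continuous_id)
    · exact continuous_finset_sum _ fun i _ => by continuity
  set coef : ℕ → ℝ := fun i =>
    iteratedDeriv (i + 1) f x * h ^ (i + 1) / (Nat.factorial (i + 1) : ℝ) with hcoef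
  have hdecomp : ∀ z : ℝ, K z * (f (x + h * z) - f x)
      = (∑ i ∈ range ℓ, coef i * (z ^ (i + 1) * K z)) + K z * R (h * z) := by
    intro z
    have h1 : f (x + h * z)
        = (∑ i ∈ range (ℓ + 1),
            iteratedDeriv i g 0 * (h * z) ^ i / (Nat.factorial i : ℝ)) + R (h * z) := by
      simp [hRdef, hgdef]
    have h2 : ∑ i ∈ range (ℓ + 1),
        iteratedDeriv i g 0 * (h * z) ^ i / (Nat.factorial i : ℝ)
        = f x + ∑ i ∈ range ℓ,
            iteratedDeriv (i + 1) f x * (h * z) ^ (i + 1) / (Nat.factorial (i + 1) : ℝ) := by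
      rw [Finset.sum_range_succ']
      have : iteratedDeriv 0 g 0 * (h * z) ^ 0 / (Nat.factorial 0 : ℝ) = f x := by
        simp [hiterg, hgdef]
      rw [this, add_comm]
      congr 1
      refine Finset.sum_congr rfl fun i _ => ?_
      rw [hiterg]
      simp
    rw [h1, h2]
    have h3 : ∀ i ∈ range ℓ, K z * (iteratedDeriv (i + 1) f x * (h * z) ^ (i + 1)
        / (Nat.factorial (i + 1) : ℝ)) = coef i * (z ^ (i + 1) * K z) := by
      intro i _
      rw [hcoef]
      rw [mul_pow]
      ring
    have h4 : K z * (f x + (∑ i ∈ range ℓ, iteratedDeriv (i + 1) f x * (h * z) ^ (i + 1)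
        / (Nat.factorial (i + 1) : ℝ)) + R (h * z) - f x)
        = (∑ i ∈ range ℓ, K z * (iteratedDeriv (i + 1) f x * (h * z) ^ (i + 1)
            / (Nat.factorial (i + 1) : ℝ))) + K z * R (h * z) := by
      rw [← Finset.mul_sum]; ring
    rw [h4, Finset.sum_congr rfl h3]
  have hint_poly : ∀ i ∈ range ℓ, Integrable (fun z => coef i * (z ^ (i + 1) * K z)) := by
    intro i hi
    refine Integrable.const_mul ?_ _
    refine Integrable.mono' (hKmom_int (i + 1) (by simp at hi; omega)) ?_ ?_
    · exact ((continuous_pow (i + 1)).aestronglyMeasurable).mul hKint.1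
    · refine Filter.Eventually.of_forall fun z => ?_
      rw [Real.norm_eq_abs, abs_mul, abs_pow]
  have hbound : ∀ z : ℝ, ‖K z * R (h * z)‖ ≤ (L * h ^ β) * (|z| ^ β * |K z|) := by
    intro z
    rw [Real.norm_eq_abs, abs_mul]
    have h1 : |R (h * z)| ≤ L * (h ^ β * |z| ^ β) := by
      have := hR (h * z)
      rwa [abs_mul, abs_of_pos hh, Real.mul_rpow hh.le (abs_nonneg z)] at this
    calc |K z| * |R (h * z)| ≤ |K z| * (L * (h ^ β * |z| ^ β)) := by
          exact mul_le_mul_of_nonneg_left h1 (abs_nonneg _)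
      _ = (L * h ^ β) * (|z| ^ β * |K z|) := by ring
  have hR_int : Integrable (fun z => K z * R (h * z)) := by
    refine Integrable.mono' ((hKβ.const_mul (L * h ^ β))) ?_
      (Filter.Eventually.of_forall hbound)
    exact hKint.1.mul (hRcont.comp (continuous_const.mul continuous_id)).aestronglyMeasurable
  have hint : Integrable (fun z => K z * (f (x + h * z) - f x)) := by
    refine Integrable.congr (((integrable_finset_sum _ hint_poly).add hR_int)) ?_
    exact Filter.Eventually.of_forall fun z => (hdecomp z).symm
  refine ⟨hint, ?_⟩
  have hIeq : (∫ z, K z * (f (x + h * z) - f x)) = ∫ z, K z * R (h * z) := by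
    rw [integral_congr_ae (Filter.Eventually.of_forall hdecomp)]
    rw [integral_add (integrable_finset_sum _ hint_poly) hR_int]
    rw [integral_finset_sum _ hint_poly]
    have : ∀ i ∈ range ℓ, (∫ z, coef i * (z ^ (i + 1) * K z)) = 0 := by
      intro i hi
      rw [integral_const_mul, hKmom (i + 1) (by omega) (by simp at hi; omega), mul_zero]
    rw [Finset.sum_congr rfl this]
    simp
  rw [hIeq]
  calc |∫ z, K z * R (h * z)| ≤ ∫ z, ‖K z * R (h * z)‖ := by
        rw [← Real.norm_eq_abs]; exact norm_integral_le_integral_norm _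
    _ ≤ ∫ z, (L * h ^ β) * (|z| ^ β * |K z|) := by
        exact integral_mono hR_int.norm (hKβ.const_mul _) hbound
    _ = L * (∫ z, |z| ^ β * |K z|) * h ^ β := by
        rw [integral_const_mul]; ring

theorem my_sub1 (φ : ℝ → ℝ) (x h : ℝ) (hh : 0 < h) :
    (∫ z, φ (x + h * z)) = h⁻¹ * ∫ y, φ y := by
  have h1 : (∫ z, φ (x + h * z)) = |h⁻¹| • ∫ t, φ (x + t) := by
    simpa using MeasureTheory.Measure.integral_comp_mul_left (fun t => φ (x + t)) h
  rw [h1, MeasureTheory.integral_add_left_eq_self (fun t => φ t) x]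
  simp [abs_of_pos (inv_pos.mpr hh), smul_eq_mul]

theorem main_core (β L : ℝ) (hβ : 0 < β) (hL : 0 < L) (ℓ : ℕ) (hℓ : ℓ = ⌊β⌋₊)
    (f : ℝ → ℝ) (hf_smooth : ContDiff ℝ ℓ f)
    (hf_holder : ∀ x y : ℝ,
      |iteratedDeriv ℓ f y - iteratedDeriv ℓ f x| ≤ L * |y - x| ^ (β - ℓ))
    (hf0 : ∀ y, 0 ≤ f y) (hfint : Integrable f) (hf1 : ∫ y, f y = 1)
    (M : ℝ) (hM : 0 < M) (hfM : ∀ y, f y ≤ M)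
    (K : ℝ → ℝ) (hKsm : StronglyMeasurable K) (hKint : Integrable K) (hK1 : ∫ z, K z = 1)
    (hK2 : MemLp K 2 volume)
    (hKmom_int : ∀ i : ℕ, i ≤ ℓ → Integrable (fun z => |z| ^ i * |K z|))
    (hKmom : ∀ i : ℕ, 1 ≤ i → i ≤ ℓ → ∫ z, z ^ i * K z = 0)
    (hKβ : Integrable (fun z => |z| ^ β * |K z|))
    (n : ℕ) (hn : 0 < n) (h : Fin n → ℝ) (hh : ∀ k, 0 < h k)
    (Ω : Type) (mΩ : MeasurableSpace Ω) (P : Measure Ω) (hP : IsProbabilityMeasure P)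
    (X : Fin n → Ω → ℝ) (hXm : ∀ k, Measurable (X k))
    (hXind : iIndepFun X P)
    (hXmap : ∀ k, Measure.map (X k) P
      = volume.withDensity (fun y => ENNReal.ofReal (f y)))
    (x : ℝ) :
    (∫ ω, ((1 / (n : ℝ)) * ∑ k, (1 / h k) * K ((X k ω - x) / h k) - f x) ^ 2 ∂P)
      ≤ ((L * (∫ z, |z| ^ β * |K z|) * (Nat.factorial ℓ : ℝ)) ^ 2
            + M * (∫ z, (K z) ^ 2) + 1) / (n : ℝ) ^ 2
          * ((∑ k, h k ^ β / (Nat.factorial ℓ : ℝ)) ^ 2 + ∑ k, 1 / h k) := by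
  have hfc : Continuous f := hf_smooth.continuous
  have hfmeas : Measurable f := hfc.measurable
  set Cβ : ℝ := ∫ z, |z| ^ β * |K z| with hCβdef
  have hCβ0 : 0 ≤ Cβ := integral_nonneg fun z => by positivity
  set I2 : ℝ := ∫ z, (K z) ^ 2 with hI2def
  have hI20 : 0 ≤ I2 := integral_nonneg fun z => sq_nonneg _
  set μ : Measure ℝ := volume.withDensity (fun y => ENNReal.ofReal (f y)) with hμdef
  have hμprob : IsProbabilityMeasure μ := by
    constructor
    rw [hμdef, withDensity_apply _ MeasurableSet.univ, Measure.restrict_univ,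
      ← ofReal_integral_eq_lintegral_ofReal hfint (Filter.Eventually.of_forall hf0), hf1]
    simp
  have hμac : μ ≪ volume := withDensity_absolutelyContinuous _ _
  -- the scaled kernels
  set g : Fin n → ℝ → ℝ := fun k y => (1 / h k) * K ((y - x) / h k) with hgdef
  have hgm : ∀ k, Measurable (g k) := by
    intro k
    exact (hKsm.measurable.comp (by fun_prop)).const_mul _
  -- withDensity integral formula
  have hμint : ∀ (ψ : ℝ → ℝ), (∫ y, ψ y ∂μ) = ∫ y, f y * ψ y := by
    intro ψ
    have hfnn : Measurable (fun y => (f y).toNNReal) := hfmeas.real_toNNReal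
    have : μ = volume.withDensity (fun y => ((f y).toNNReal : ℝ≥0∞)) := by
      rw [hμdef]; rfl
    rw [this, integral_withDensity_eq_integral_smul hfnn]
    refine integral_congr_ae (Filter.Eventually.of_forall fun y => ?_)
    simp [NNReal.smul_def, Real.coe_toNNReal _ (hf0 y)]
  -- K squared integrable
  have hK2int : Integrable (fun z => (K z) ^ 2) :=
    (memLp_two_iff_integrable_sq hKsm.aestronglyMeasurable).mp hK2
  -- second moment computations, for each k
  have hg_sq_int : ∀ k, Integrable (fun y => (g k y) ^ 2) volume := by
    intro k
    have h1 : Integrable (fun y => (K ((y - x) / h k)) ^ 2) :=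
      (hK2int.comp_div (hh k).ne').comp_sub_right x
    have := h1.const_mul ((1 / h k) ^ 2)
    refine this.congr (Filter.Eventually.of_forall fun y => ?_)
    rw [hgdef]; ring
  have hKsq_subst : ∀ k, (∫ y, (K ((y - x) / h k)) ^ 2) = h k * I2 := by
    intro k
    have := my_sub1 (fun y => (K ((y - x) / h k)) ^ 2) x (h k) (hh k)
    have h2 : ∀ z : ℝ, (K ((x + h k * z - x) / h k)) ^ 2 = (K z) ^ 2 := by
      intro z
      rw [add_sub_cancel_left, mul_div_cancel_left₀ _ (hh k).ne']
    rw [funext h2] at this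
    rw [hI2def, this, ← mul_assoc, mul_inv_cancel₀ (hh k).ne', one_mul]
  -- integrability of g^2 against μ and second moment bound
  have hg_sq_int_mu : ∀ k, Integrable (fun y => (g k y) ^ 2) μ := by
    intro k
    rw [hμdef, integrable_withDensity_iff (hfmeas.ennreal_ofReal)
      (Filter.Eventually.of_forall fun y => ENNReal.ofReal_lt_top)]
    refine Integrable.mono' ((hg_sq_int k).const_mul M)
      (((hgm k).pow_const 2).aestronglyMeasurable.mul
        (hfmeas.ennreal_ofReal.ennreal_toReal).aestronglyMeasurable)
      (Filter.Eventually.of_forall fun y => ?_)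
    rw [ENNReal.toReal_ofReal (hf0 y), Real.norm_eq_abs, abs_mul,
      abs_of_nonneg (sq_nonneg _), abs_of_nonneg (hf0 y)]
    calc (g k y) ^ 2 * f y ≤ (g k y) ^ 2 * M :=
          mul_le_mul_of_nonneg_left (hfM y) (sq_nonneg _)
      _ = M * (g k y) ^ 2 := by ring
  have hg_memLp : ∀ k, MemLp (g k) 2 μ := by
    intro k
    exact (memLp_two_iff_integrable_sq (hgm k).aestronglyMeasurable).mpr (hg_sq_int_mu k)
  have hg_sq_bound : ∀ k, (∫ y, (g k y) ^ 2 ∂μ) ≤ M * I2 * (1 / h k) := by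
    intro k
    rw [hμint]
    have h1 : (∫ y, f y * (g k y) ^ 2) ≤ ∫ y, M * (g k y) ^ 2 := by
      refine integral_mono ?_ ((hg_sq_int k).const_mul M) fun y => ?_
      · refine Integrable.mono' ((hg_sq_int k).const_mul M)
          (hfmeas.aestronglyMeasurable.mul ((hgm k).pow_const 2).aestronglyMeasurable)
          (Filter.Eventually.of_forall fun y => ?_)
        rw [Real.norm_eq_abs, abs_mul, abs_of_nonneg (hf0 y), abs_of_nonneg (sq_nonneg _)]
        calc f y * (g k y) ^ 2 ≤ M * (g k y) ^ 2 :=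
          mul_le_mul_of_nonneg_right (hfM y) (sq_nonneg _)
        _ = M * (g k y) ^ 2 := rfl
      · exact mul_le_mul_of_nonneg_right (hfM y) (sq_nonneg _)
    have h2 : (∫ y, M * (g k y) ^ 2) = M * ((1 / h k) ^ 2 * (h k * I2)) := by
      rw [integral_const_mul]
      congr 1
      rw [← hKsq_subst k, ← integral_const_mul]
      refine integral_congr_ae (Filter.Eventually.of_forall fun y => ?_)
      rw [hgdef]; ring
    refine h1.trans (le_of_eq ?_)
    rw [h2]
    field_simp [(hh k).ne']
  -- first moment: expectation of g k against μ
  have hbias := fun k => bias_key β L hβ hL ℓ hℓ f hf_smooth hf_holder K hKint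
      hKmom_int hKmom hKβ x (h k) (hh k)
  set B : Fin n → ℝ := fun k => ∫ z, K z * (f (x + h k * z) - f x) with hBdef
  have hBbound : ∀ k, |B k| ≤ L * Cβ * h k ^ β := fun k => (hbias k).2
  have hg_int_mu : ∀ k, Integrable (g k) μ := fun k => (hg_memLp k).integrable one_le_two
  have hg_mean : ∀ k, (∫ y, g k y ∂μ) = f x + B k := by
    intro k
    rw [hμint]
    have hsub := my_sub1 (fun y => f y * g k y) x (h k) (hh k)
    have h2 : ∀ z : ℝ, f (x + h k * z) * g k (x + h k * z)
        = (1 / h k) * (K z * (f (x + h k * z) - f x) + f x * K z) := by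
      intro z
      have : (x + h k * z - x) / h k = z := by
        rw [add_sub_cancel_left, mul_div_cancel_left₀ _ (hh k).ne']
      rw [hgdef]
      simp only [this]
      ring
    rw [funext h2, integral_const_mul,
      integral_add (hbias k).1 (hKint.const_mul (f x)), integral_const_mul, hK1] at hsub
    have h3 : (∫ y, f y * g k y) = h k * ((1 / h k) * (B k + f x * 1)) := by
      rw [hsub, ← mul_assoc, mul_inv_cancel₀ (hh k).ne', one_mul]
    rw [h3, one_div, ← mul_assoc, mul_inv_cancel₀ (hh k).ne', one_mul, mul_one, add_comm]
    done
  -- move to Ω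
  set Y : Fin n → Ω → ℝ := fun k ω => g k (X k ω) with hYdef
  have hYm : ∀ k, Measurable (Y k) := fun k => (hgm k).comp (hXm k)
  have hYmem : ∀ k, MemLp (Y k) 2 P := by
    intro k
    have := (memLp_map_measure_iff
      (by rw [hXmap k]; exact (hgm k).aestronglyMeasurable) (hXm k).aemeasurable).mp
      (by rw [hXmap k]; exact hg_memLp k)
    exact this
  have hYint : ∀ k, Integrable (Y k) P := fun k => (hYmem k).integrable one_le_two
  have hYmean : ∀ k, (∫ ω, Y k ω ∂P) = f x + B k := by
    intro k
    rw [← hg_mean k, ← hXmap k,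
      integral_map (hXm k).aemeasurable
        (by rw [hXmap k]; exact (hgm k).aestronglyMeasurable)]
  have hYsq : ∀ k, (∫ ω, (Y k ω) ^ 2 ∂P) ≤ M * I2 * (1 / h k) := by
    intro k
    have heq : (∫ ω, (Y k ω) ^ 2 ∂P) = ∫ y, (g k y) ^ 2 ∂μ := by
      rw [← hXmap k, integral_map (hXm k).aemeasurable
        (by rw [hXmap k]; exact ((hgm k).pow_const 2).aestronglyMeasurable)]
    rw [heq]
    exact hg_sq_bound k
  -- independence and variance
  have hYind : ∀ (i j : Fin n), i ≠ j → IndepFun (Y i) (Y j) P := by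
    intro i j hij
    exact (hXind.indepFun hij).comp (hgm i) (hgm j)
  have hvarsum : variance (∑ k, Y k) P = ∑ k, variance (Y k) P := by
    refine IndepFun.variance_sum (fun k _ => hYmem k) ?_
    intro i hi j hj hij
    exact hYind i j hij
  have hvar_le : ∀ k, variance (Y k) P ≤ M * I2 * (1 / h k) := by
    intro k
    refine le_trans (variance_le_expectation_sq (hYm k).aestronglyMeasurable) ?_
    have : P[(Y k) ^ 2] = ∫ ω, (Y k ω) ^ 2 ∂P := by
      refine integral_congr_ae (Filter.Eventually.of_forall fun ω => ?_)
      simp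
    rw [this]
    exact hYsq k
  -- assemble
  have hn0 : ((n : ℝ)) ≠ 0 := Nat.cast_ne_zero.mpr hn.ne'
  set S : Ω → ℝ := ∑ k, Y k with hSdef
  have hSmem : MemLp S 2 P := memLp_finset_sum' univ (fun k _ => hYmem k)
  set T : Ω → ℝ := fun ω => (n : ℝ)⁻¹ * S ω with hTdef
  have hTmem : MemLp T 2 P := hSmem.const_mul ((n : ℝ)⁻¹)
  have hTint : Integrable T P := hTmem.integrable one_le_two
  have hTsq : Integrable (fun ω => (T ω) ^ 2) P := hTmem.integrable_sq
  have hET : (∫ ω, T ω ∂P) = f x + (n : ℝ)⁻¹ * ∑ k, B k := by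
    rw [hTdef, integral_const_mul]
    have hS : (∫ ω, S ω ∂P) = ∑ k, (f x + B k) := by
      rw [hSdef]
      have h1 : (∫ ω, (∑ k, Y k) ω ∂P) = ∫ ω, ∑ k, Y k ω ∂P := by
        refine integral_congr_ae (Filter.Eventually.of_forall fun ω => ?_)
        simp [Finset.sum_apply]
      rw [h1, integral_finset_sum univ (fun k _ => hYint k)]
      exact Finset.sum_congr rfl fun k _ => hYmean k
    rw [hS, Finset.sum_add_distrib, Finset.sum_const, card_univ, Fintype.card_fin]
    field_simp
    ring
  have hexpand : (∫ ω, (T ω - f x) ^ 2 ∂P)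
      = variance T P + ((∫ ω, T ω ∂P) - f x) ^ 2 := by
    have hvd : variance T P = (∫ ω, (T ω) ^ 2 ∂P) - (∫ ω, T ω ∂P) ^ 2 :=
      variance_eq_sub hTmem
    have h1 : (∫ ω, (T ω - f x) ^ 2 ∂P)
        = ∫ ω, ((T ω) ^ 2 - (2 * f x) * T ω + (f x) ^ 2) ∂P := by
      refine integral_congr_ae (Filter.Eventually.of_forall fun ω => ?_)
      ring
    have hIa : Integrable (fun ω => (2 * f x) * T ω) P := hTint.const_mul _
    have e1 : (∫ ω, ((T ω) ^ 2 - (2 * f x) * T ω + (f x) ^ 2) ∂P)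
        = (∫ ω, ((T ω) ^ 2 - (2 * f x) * T ω) ∂P) + ∫ ω, (f x) ^ 2 ∂P :=
      integral_add (hTsq.sub hIa) (integrable_const _)
    have e2 : (∫ ω, ((T ω) ^ 2 - (2 * f x) * T ω) ∂P)
        = (∫ ω, (T ω) ^ 2 ∂P) - ∫ ω, (2 * f x) * T ω ∂P := integral_sub hTsq hIa
    have e3 : (∫ ω, (2 * f x) * T ω ∂P) = (2 * f x) * ∫ ω, T ω ∂P :=
      integral_const_mul _ _
    have e4 : (∫ ω, (f x) ^ 2 ∂P : ℝ) = (f x) ^ 2 := by simp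
    rw [h1, e1, e2, e3, e4, hvd]
    ring
  have hvarT : variance T P ≤ ((n : ℝ)⁻¹) ^ 2 * (M * I2 * ∑ k, 1 / h k) := by
    have h1 : variance T P = ((n : ℝ)⁻¹) ^ 2 * variance S P := by
      rw [hTdef]; exact variance_const_mul _ S P
    rw [h1, hSdef, hvarsum]
    refine mul_le_mul_of_nonneg_left ?_ (by positivity)
    calc ∑ k, variance (Y k) P ≤ ∑ k, M * I2 * (1 / h k) :=
          Finset.sum_le_sum fun k _ => hvar_le k
      _ = M * I2 * ∑ k, 1 / h k := by rw [← Finset.mul_sum]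
  have hbiasT : ((∫ ω, T ω ∂P) - f x) ^ 2
      ≤ ((n : ℝ)⁻¹) ^ 2 * ((L * Cβ) ^ 2 * (∑ k, h k ^ β) ^ 2) := by
    rw [hET]
    have h1 : |f x + (n : ℝ)⁻¹ * ∑ k, B k - f x|
        ≤ (n : ℝ)⁻¹ * (L * Cβ * ∑ k, h k ^ β) := by
      rw [add_sub_cancel_left, abs_mul, abs_of_nonneg (inv_nonneg.mpr (Nat.cast_nonneg n))]
      refine mul_le_mul_of_nonneg_left ?_ (by positivity)
      calc |∑ k, B k| ≤ ∑ k, |B k| := Finset.abs_sum_le_sum_abs _ _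
        _ ≤ ∑ k, L * Cβ * h k ^ β := Finset.sum_le_sum fun k _ => hBbound k
        _ = L * Cβ * ∑ k, h k ^ β := by rw [← Finset.mul_sum]
    calc (f x + (n : ℝ)⁻¹ * ∑ k, B k - f x) ^ 2
        = |f x + (n : ℝ)⁻¹ * ∑ k, B k - f x| ^ 2 := (sq_abs _).symm
      _ ≤ ((n : ℝ)⁻¹ * (L * Cβ * ∑ k, h k ^ β)) ^ 2 :=
          pow_le_pow_left₀ (abs_nonneg _) h1 2
      _ = ((n : ℝ)⁻¹) ^ 2 * ((L * Cβ) ^ 2 * (∑ k, h k ^ β) ^ 2) := by ring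
  have hgoal : (∫ ω, ((1 / (n : ℝ)) * ∑ k, (1 / h k) * K ((X k ω - x) / h k) - f x) ^ 2 ∂P)
      = ∫ ω, (T ω - f x) ^ 2 ∂P := by
    refine integral_congr_ae (Filter.Eventually.of_forall fun ω => ?_)
    congr 1
    rw [hTdef]
    simp only [hSdef, hYdef, hgdef, Finset.sum_apply, one_div]
  rw [hgoal, hexpand]
  -- final numeric bound
  have hfacℓ : (0 : ℝ) < (Nat.factorial ℓ : ℝ) := Nat.cast_pos.mpr (Nat.factorial_pos ℓ)
  have hSh0 : 0 ≤ ∑ k, 1 / h k := Finset.sum_nonneg fun k _ => by have := hh k; positivity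
  have hSb0 : 0 ≤ ∑ k, h k ^ β := Finset.sum_nonneg fun k _ => rpow_nonneg (hh k).le β
  have hkey : (L * Cβ) ^ 2 * (∑ k, h k ^ β) ^ 2
      = (L * Cβ * (Nat.factorial ℓ : ℝ)) ^ 2
        * (∑ k, h k ^ β / (Nat.factorial ℓ : ℝ)) ^ 2 := by
    rw [← Finset.sum_div, div_pow]
    field_simp
  set Sq : ℝ := (∑ k, h k ^ β / (Nat.factorial ℓ : ℝ)) ^ 2 with hSqdef
  set Sh : ℝ := ∑ k, 1 / h k with hShdef
  set A : ℝ := (L * Cβ * (Nat.factorial ℓ : ℝ)) ^ 2 with hAdef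
  have hSq0 : 0 ≤ Sq := sq_nonneg _
  have hA0 : 0 ≤ A := sq_nonneg _
  have hMI0 : 0 ≤ M * I2 := mul_nonneg hM.le hI20
  calc variance T P + ((∫ ω, T ω ∂P) - f x) ^ 2
      ≤ ((n : ℝ)⁻¹) ^ 2 * (M * I2 * Sh) + ((n : ℝ)⁻¹) ^ 2 * (A * Sq) := by
        rw [hkey] at hbiasT
        exact add_le_add hvarT hbiasT
    _ = ((n : ℝ)⁻¹) ^ 2 * (A * Sq + M * I2 * Sh) := by ring
    _ ≤ ((n : ℝ)⁻¹) ^ 2 * ((A + M * I2 + 1) * (Sq + Sh)) := by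
        refine mul_le_mul_of_nonneg_left ?_ (by positivity)
        nlinarith [mul_nonneg hA0 hSh0, mul_nonneg hMI0 hSq0, hSq0, hSh0]
    _ = (A + M * I2 + 1) / (n : ℝ) ^ 2 * (Sq + Sh) := by
        field_simp

theorem my_ae_kernel (K K₀ : ℝ → ℝ) (hKK : K =ᵐ[volume] K₀) (x c : ℝ) (hc : 0 < c)
    (Ω : Type) (mΩ : MeasurableSpace Ω) (P : Measure Ω) (f : ℝ → ℝ)
    (X : Ω → ℝ) (hXm : Measurable X)
    (hXmap : Measure.map X P = volume.withDensity (fun y => ENNReal.ofReal (f y))) :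
    (fun ω => K ((X ω - x) / c)) =ᵐ[P] fun ω => K₀ ((X ω - x) / c) := by
  have q1 : Measure.QuasiMeasurePreserving (fun y : ℝ => y - x) volume volume := by
    have := measurePreserving_add_right (volume : Measure ℝ) (-x)
    simpa [sub_eq_add_neg] using this.quasiMeasurePreserving
  have q2 : Measure.QuasiMeasurePreserving (fun t : ℝ => c⁻¹ * t) volume volume := by
    refine ⟨measurable_const_mul _, ?_⟩
    rw [show (fun t : ℝ => c⁻¹ * t) = (c⁻¹ * ·) from rfl,
      Real.map_volume_mul_left (inv_ne_zero hc.ne')]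
    exact Measure.smul_absolutelyContinuous
  have hq : Measure.QuasiMeasurePreserving (fun y : ℝ => (y - x) / c) volume volume := by
    have := q2.comp q1
    simpa [Function.comp_def, div_eq_inv_mul] using this
  have h1 : (fun y : ℝ => K ((y - x) / c)) =ᵐ[volume] fun y => K₀ ((y - x) / c) :=
    hq.ae_eq hKK
  have h2 : (fun y : ℝ => K ((y - x) / c)) =ᵐ[Measure.map X P] fun y => K₀ ((y - x) / c) := by
    rw [hXmap]
    exact (withDensity_absolutelyContinuous volume _).ae_eq h1
  exact ae_eq_comp (f := X) hXm.aemeasurable h2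


/-- MSE bound for the Wolverton-Wagner estimator: for `f` in the Hölder class
`Σ(β,L)` and a kernel of order `ℓ = ⌊β⌋`, there is a constant `c > 0`
(depending only on `β`, `L` and the kernel, not on `n`, the bandwidths or `x`)
such that `E(|f̂_{n,h}(x) − f(x)|²) ≤ (c/n²)(|∑ h_k^β/ℓ!|² + ∑ 1/h_k)`. -/
theorem stmt_2
    (β L : ℝ) (hβ : 0 < β) (hL : 0 < L)
    (ℓ : ℕ) (hℓ : ℓ = ⌊β⌋₊)
    (f : ℝ → ℝ) (hf_smooth : ContDiff ℝ ℓ f)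
    (hf_holder : ∀ x y : ℝ,
      |iteratedDeriv ℓ f y - iteratedDeriv ℓ f x| ≤ L * |y - x| ^ (β - ℓ))
    (hf0 : ∀ y, 0 ≤ f y) (hfint : Integrable f) (hf1 : ∫ y, f y = 1)
    (hfbdd : ∃ M, ∀ y, f y ≤ M)
    (K : ℝ → ℝ) (hKint : Integrable K) (hK1 : ∫ z, K z = 1)
    (hK2 : MemLp K 2 volume)
    (hKmom_int : ∀ i : ℕ, i ≤ ℓ → Integrable (fun z => |z| ^ i * |K z|))
    (hKmom : ∀ i : ℕ, 1 ≤ i → i ≤ ℓ → ∫ z, z ^ i * K z = 0)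
    (hKβ : Integrable (fun z => |z| ^ β * |K z|)) :
    ∃ c > 0, ∀ (n : ℕ), 0 < n → ∀ (h : Fin n → ℝ), (∀ k, 0 < h k) →
      (∀ k l : Fin n, k < l → h l < h k) →
      ∀ (Ω : Type) (_ : MeasurableSpace Ω) (P : Measure Ω),
        IsProbabilityMeasure P →
        ∀ (X : Fin n → Ω → ℝ), (∀ k, Measurable (X k)) →
          iIndepFun X P →
          (∀ k, Measure.map (X k) P
            = volume.withDensity (fun y => ENNReal.ofReal (f y))) →
          ∀ x : ℝ,
            (∫ ω, ((1 / (n : ℝ)) * ∑ k, (1 / h k) * K ((X k ω - x) / h k)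
                - f x) ^ 2 ∂P)
              ≤ c / (n : ℝ) ^ 2
                  * ((∑ k, h k ^ β / (Nat.factorial ℓ : ℝ)) ^ 2
                      + ∑ k, 1 / h k) := by
  obtain ⟨M₀, hM₀⟩ := hfbdd
  set M : ℝ := max M₀ 1 with hMdef
  have hM : 0 < M := lt_of_lt_of_le one_pos (le_max_right _ _)
  have hfM : ∀ y, f y ≤ M := fun y => (hM₀ y).trans (le_max_left _ _)
  set K₀ : ℝ → ℝ := hKint.1.mk K with hK₀def
  have hK₀sm : StronglyMeasurable K₀ := hKint.1.stronglyMeasurable_mk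
  have hKK : K =ᵐ[volume] K₀ := hKint.1.ae_eq_mk
  have hKint₀ : Integrable K₀ := hKint.congr hKK
  have hK1₀ : (∫ z, K₀ z) = 1 := by rw [← integral_congr_ae hKK]; exact hK1
  have hK2₀ : MemLp K₀ 2 volume := hK2.ae_eq hKK
  have hKmom_int₀ : ∀ i : ℕ, i ≤ ℓ → Integrable (fun z => |z| ^ i * |K₀ z|) := by
    intro i hi
    refine (hKmom_int i hi).congr ?_
    filter_upwards [hKK] with z hz
    rw [hz]
  have hKmom₀ : ∀ i : ℕ, 1 ≤ i → i ≤ ℓ → (∫ z, z ^ i * K₀ z) = 0 := by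
    intro i h1 h2
    rw [← hKmom i h1 h2]
    refine integral_congr_ae ?_
    filter_upwards [hKK] with z hz
    rw [hz]
  have hKβ₀ : Integrable (fun z => |z| ^ β * |K₀ z|) := by
    refine hKβ.congr ?_
    filter_upwards [hKK] with z hz
    rw [hz]
  have hCβeq : (∫ z, |z| ^ β * |K z|) = ∫ z, |z| ^ β * |K₀ z| := by
    refine integral_congr_ae ?_
    filter_upwards [hKK] with z hz
    rw [hz]
  have hI2eq : (∫ z, (K z) ^ 2) = ∫ z, (K₀ z) ^ 2 := by
    refine integral_congr_ae ?_
    filter_upwards [hKK] with z hz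
    rw [hz]
  have hI20 : 0 ≤ ∫ z, (K z) ^ 2 := integral_nonneg fun z => sq_nonneg _
  refine ⟨(L * (∫ z, |z| ^ β * |K z|) * (Nat.factorial ℓ : ℝ)) ^ 2
      + M * (∫ z, (K z) ^ 2) + 1, ?_, ?_⟩
  · have h1 : 0 ≤ (L * (∫ z, |z| ^ β * |K z|) * (Nat.factorial ℓ : ℝ)) ^ 2 := sq_nonneg _
    nlinarith [mul_nonneg hM.le hI20]
  intro n hn h hh _ Ω mΩ P hP X hXm hXind hXmap x
  have hae : ∀ k, (fun ω => K ((X k ω - x) / h k)) =ᵐ[P]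
      fun ω => K₀ ((X k ω - x) / h k) := fun k =>
    my_ae_kernel K K₀ hKK x (h k) (hh k) Ω mΩ P f (X k) (hXm k) (hXmap k)
  have hae_sum : (fun ω => ((1 / (n : ℝ)) * ∑ k, (1 / h k) * K ((X k ω - x) / h k)
        - f x) ^ 2) =ᵐ[P]
      fun ω => ((1 / (n : ℝ)) * ∑ k, (1 / h k) * K₀ ((X k ω - x) / h k) - f x) ^ 2 := by
    have h1 : ∀ᵐ ω ∂P, ∀ k, K ((X k ω - x) / h k) = K₀ ((X k ω - x) / h k) :=
      ae_all_iff.mpr fun k => hae k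
    filter_upwards [h1] with ω hω
    have h2 : (∑ k, (1 / h k) * K ((X k ω - x) / h k))
        = ∑ k, (1 / h k) * K₀ ((X k ω - x) / h k) :=
      Finset.sum_congr rfl fun k _ => by rw [hω k]
    rw [h2]
  have hfinal := main_core β L hβ hL ℓ hℓ f hf_smooth hf_holder hf0 hfint hf1
    M hM hfM K₀ hK₀sm hKint₀ hK1₀ hK2₀ hKmom_int₀ hKmom₀ hKβ₀
    n hn h hh Ω mΩ P hP X hXm hXind hXmap x
  calc (∫ ω, ((1 / (n : ℝ)) * ∑ k, (1 / h k) * K ((X k ω - x) / h k) - f x) ^ 2 ∂P)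
      = ∫ ω, ((1 / (n : ℝ)) * ∑ k, (1 / h k) * K₀ ((X k ω - x) / h k) - f x) ^ 2 ∂P :=
        integral_congr_ae hae_sum
    _ ≤ ((L * (∫ z, |z| ^ β * |K₀ z|) * (Nat.factorial ℓ : ℝ)) ^ 2
          + M * (∫ z, (K₀ z) ^ 2) + 1) / (n : ℝ) ^ 2
          * ((∑ k, h k ^ β / (Nat.factorial ℓ : ℝ)) ^ 2 + ∑ k, 1 / h k) := hfinal
    _ = ((L * (∫ z, |z| ^ β * |K z|) * (Nat.factorial ℓ : ℝ)) ^ 2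
          + M * (∫ z, (K z) ^ 2) + 1) / (n : ℝ) ^ 2
          * ((∑ k, h k ^ β / (Nat.factorial ℓ : ℝ)) ^ 2 + ∑ k, 1 / h k) := by
        rw [hCβeq, hI2eq]
end

section
/- Let K ∈ L¹ ∩ L² ∩ L^∞ and f a bounded density, and let X, X' be independent with density f. Then for bandwidths h, h' > 0, E( (∫ K_h(X − x) K_{h'}(X' − x) dx)² ) ≤ ‖K‖₁² ‖K‖₂² ‖f‖_∞ / h. -/
open Real MeasureTheory ProbabilityTheory
open scoped ENNReal NNReal

/-- Scaled kernel `K_h(u) = (1/h) K(u/h)`. -/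
noncomputable def scaledKer (K : ℝ → ℝ) (h u : ℝ) : ℝ := (1 / h) * K (u / h)

lemma map_affine {a : ℝ} (ha : a ≠ 0) (b : ℝ) :
    Measure.map (fun x => a * x + b) volume = ENNReal.ofReal |a⁻¹| • volume := by
  rw [show (fun x : ℝ => a * x + b) = (fun y => y + b) ∘ (fun x => a * x) from rfl,
    ← Measure.map_map (by fun_prop) (by fun_prop), Real.map_volume_mul_left ha,
    Measure.map_smul, map_add_right_eq_self]

lemma lint_affine {G : ℝ → ℝ≥0∞} (hG : Measurable G) {a : ℝ} (ha : a ≠ 0) (b : ℝ) :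
    ∫⁻ x, G (a * x + b) = ENNReal.ofReal |a⁻¹| * ∫⁻ u, G u := by
  rw [← lintegral_map hG (by fun_prop), map_affine ha b, lintegral_smul_measure, smul_eq_mul]

-- change of variables specialized to (c - x)/s  and (x - c)/s
lemma lint_sub_div {G : ℝ → ℝ≥0∞} (hG : Measurable G) {s : ℝ} (hs : 0 < s) (c : ℝ) :
    ∫⁻ x, G ((c - x) / s) = ENNReal.ofReal s * ∫⁻ u, G u := by
  have e : ∀ x : ℝ, (c - x) / s = (-(1/s)) * x + c / s := fun x => by ring
  simp_rw [e]
  rw [lint_affine hG (neg_ne_zero.mpr (by positivity)) (c / s)]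
  congr 1
  rw [show (-(1/s))⁻¹ = -s by field_simp, abs_neg, abs_of_pos hs]

lemma lint_div_sub {G : ℝ → ℝ≥0∞} (hG : Measurable G) {s : ℝ} (hs : 0 < s) (c : ℝ) :
    ∫⁻ x, G ((x - c) / s) = ENNReal.ofReal s * ∫⁻ u, G u := by
  have e : ∀ x : ℝ, (x - c) / s = (1/s) * x + (-(c / s)) := fun x => by ring
  simp_rw [e]
  rw [lint_affine hG (by positivity) _]
  congr 1
  rw [show ((1:ℝ)/s)⁻¹ = s by field_simp, abs_of_pos hs]

lemma qmp_affine {a : ℝ} (ha : a ≠ 0) (b : ℝ) :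
    Measure.QuasiMeasurePreserving (fun x => a * x + b) volume volume := by
  refine ⟨by fun_prop, ?_⟩
  rw [map_affine ha b]
  intro s hs
  simp [hs]

lemma cs_lintegral (A B : ℝ → ℝ≥0∞) (hA : Measurable A) (hB : Measurable B) :
    (∫⁻ x, A x * B x) ^ 2 ≤ (∫⁻ x, A x ^ 2 * B x) * ∫⁻ x, B x := by
  have hroot : ∀ x : ℝ≥0∞, x ^ (1/2 : ℝ) * x ^ (1/2 : ℝ) = x := fun x => by
    rw [← ENNReal.rpow_add_of_nonneg _ _ (by norm_num) (by norm_num)]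
    norm_num
  set b : ℝ → ℝ≥0∞ := fun x => B x ^ (1/2 : ℝ) with hb
  have hbm : Measurable b := hB.pow_const _
  have h2 : Real.HolderConjugate 2 2 := Real.HolderConjugate.two_two
  have key := ENNReal.lintegral_mul_le_Lp_mul_Lq volume h2
    (f := fun x => A x * b x) (g := b) ((hA.mul hbm).aemeasurable) hbm.aemeasurable
  have e1 : ∀ x, ((fun x => A x * b x) * b) x = A x * B x := fun x => by
    simp only [Pi.mul_apply, mul_assoc, hb, hroot]
  have e2 : ∀ x, (A x * b x) ^ (2:ℝ) = A x ^ 2 * B x := fun x => by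
    rw [ENNReal.mul_rpow_of_nonneg _ _ (by norm_num)]
    rw [show ((2:ℝ)) = ((2:ℕ):ℝ) by norm_num, ENNReal.rpow_natCast,
      ENNReal.rpow_natCast]
    rw [sq, sq, hroot]
  have e3 : ∀ x, b x ^ (2:ℝ) = B x := fun x => by
    rw [show ((2:ℝ)) = ((2:ℕ):ℝ) by norm_num, ENNReal.rpow_natCast, sq, hroot]
  simp only [e1, e2, e3] at key
  calc (∫⁻ x, A x * B x) ^ 2 = (∫⁻ x, A x * B x) * (∫⁻ x, A x * B x) := sq _
    _ ≤ ((∫⁻ x, A x ^ 2 * B x) ^ (1/(2:ℝ)) * (∫⁻ x, B x) ^ (1/(2:ℝ))) *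
        ((∫⁻ x, A x ^ 2 * B x) ^ (1/(2:ℝ)) * (∫⁻ x, B x) ^ (1/(2:ℝ))) :=
      mul_le_mul' key key
    _ = (∫⁻ x, A x ^ 2 * B x) * ∫⁻ x, B x := by
      rw [mul_mul_mul_comm, hroot, hroot]

lemma core {Ω : Type*} [MeasureSpace Ω] [IsProbabilityMeasure (ℙ : Measure Ω)]
    (X X' : Ω → ℝ) (hX : Measurable X) (hX' : Measurable X')
    (hindep : IndepFun X X' ℙ)
    (ν : Measure ℝ) [IsProbabilityMeasure ν] (M : ℝ) (hM : 0 ≤ M)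
    (hνM : ν ≤ ENNReal.ofReal M • volume)
    (hmX : Measure.map X ℙ = ν) (hmX' : Measure.map X' ℙ = ν)
    (K : ℝ → ℝ) (hKm : Measurable K) (hK1 : Integrable K)
    (hK2 : Integrable (fun u => K u ^ 2))
    (h h' : ℝ) (hh : 0 < h) (hh' : 0 < h') :
    ∫ ω, (∫ x, scaledKer K h (X ω - x) * scaledKer K h' (X' ω - x)) ^ 2 ∂ℙ
      ≤ (∫ u, |K u|) ^ 2 * (∫ u, (K u) ^ 2) * M / h := by
  -- basic objects
  set I1 : ℝ≥0∞ := ∫⁻ u, ‖K u‖₊ with hI1def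
  set I2 : ℝ≥0∞ := ∫⁻ u, (‖K u‖₊ : ℝ≥0∞) ^ 2 with hI2def
  have hI1 : I1 = ENNReal.ofReal (∫ u, |K u|) := by
    rw [hI1def]
    simp_rw [← enorm_eq_nnnorm]
    rw [← ofReal_integral_norm_eq_lintegral_enorm hK1]
    simp [Real.norm_eq_abs]
  have hI2 : I2 = ENNReal.ofReal (∫ u, K u ^ 2) := by
    have e : ∀ u : ℝ, (‖K u‖₊ : ℝ≥0∞) ^ 2 = (‖K u ^ 2‖₊ : ℝ≥0∞) := fun u => by
      rw [pow_two, pow_two, ← ENNReal.coe_mul, ← nnnorm_mul]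
    rw [hI2def]
    simp_rw [e]
    simp_rw [← enorm_eq_nnnorm]
    rw [← ofReal_integral_norm_eq_lintegral_enorm hK2]
    congr 1
    exact integral_congr_ae (ae_of_all _ fun u => by
      simp [Real.norm_eq_abs, abs_of_nonneg (sq_nonneg (K u))])
  have hGm : Measurable fun u : ℝ => (‖K u‖₊ : ℝ≥0∞) := hKm.enorm
  have hker : ∀ s : ℝ, Measurable fun u => scaledKer K s u := fun s => by
    unfold scaledKer
    exact measurable_const.mul (hKm.comp (measurable_id.div_const s))
  -- the inner function
  set g : ℝ × ℝ → ℝ :=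
    fun p => ∫ x, scaledKer K h (p.1 - x) * scaledKer K h' (p.2 - x) with hgdef
  have hFm : Measurable fun q : (ℝ × ℝ) × ℝ =>
      scaledKer K h (q.1.1 - q.2) * scaledKer K h' (q.1.2 - q.2) := by
    exact ((hker h).comp ((measurable_fst.comp measurable_fst).sub measurable_snd)).mul
      ((hker h').comp ((measurable_snd.comp measurable_fst).sub measurable_snd))
  have hg : StronglyMeasurable g :=
    StronglyMeasurable.integral_prod_right' (hFm.stronglyMeasurable)
  have hpair : Measurable fun ω => (X ω, X' ω) := hX.prodMk hX'
  have hgsqm : Measurable fun p : ℝ × ℝ => ENNReal.ofReal (g p ^ 2) :=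
    (hg.measurable.pow_const 2).ennreal_ofReal
  -- Step A: convert to lintegral
  have hRHS : 0 ≤ (∫ u, |K u|) ^ 2 * (∫ u, (K u) ^ 2) * M / h := by
    have h2 : 0 ≤ ∫ u, K u ^ 2 := integral_nonneg fun u => sq_nonneg _
    positivity
  rw [show (fun ω => (∫ x, scaledKer K h (X ω - x) * scaledKer K h' (X' ω - x)) ^ 2)
      = fun ω => g (X ω, X' ω) ^ 2 from rfl]
  have hm1 : AEStronglyMeasurable (fun ω => g (X ω, X' ω) ^ 2) ℙ :=
    ((hg.measurable.comp hpair).pow_const 2).aestronglyMeasurable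
  rw [integral_eq_lintegral_of_nonneg_ae (ae_of_all _ fun ω => sq_nonneg _) hm1]
  refine ENNReal.toReal_le_of_le_ofReal hRHS ?_
  -- Step B: move to ν.prod ν
  have hmap : Measure.map (fun ω => (X ω, X' ω)) ℙ = ν.prod ν := by
    rw [(indepFun_iff_map_prod_eq_prod_map_map hX.aemeasurable hX'.aemeasurable).mp hindep,
      hmX, hmX']
  have hstepB : ∫⁻ ω, ENNReal.ofReal (g (X ω, X' ω) ^ 2) ∂ℙ
      = ∫⁻ y, ∫⁻ z, ENNReal.ofReal (g (y, z) ^ 2) ∂ν ∂ν := by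
    rw [← lintegral_map hgsqm hpair, hmap, lintegral_prod _ hgsqm.aemeasurable]
  rw [hstepB]
  -- notation for the two kernels in lintegral form
  set A : ℝ → ℝ → ℝ≥0∞ := fun y x => (‖scaledKer K h (y - x)‖₊ : ℝ≥0∞) with hAdef
  set B : ℝ → ℝ → ℝ≥0∞ := fun z x => (‖scaledKer K h' (z - x)‖₊ : ℝ≥0∞) with hBdef
  have hAm : ∀ y, Measurable (A y) := fun y =>
    ((hker h).comp (measurable_const.sub measurable_id)).enorm
  have hBm : ∀ z, Measurable (B z) := fun z =>
    ((hker h').comp (measurable_const.sub measurable_id)).enorm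
  have hBjm : Measurable fun p : ℝ × ℝ => B p.1 p.2 :=
    ((hker h').comp (measurable_fst.sub measurable_snd)).enorm
  -- pointwise bound by product lintegral
  have hpt : ∀ y z : ℝ, ENNReal.ofReal (g (y, z) ^ 2) ≤ (∫⁻ x, A y x * B z x) ^ 2 := by
    intro y z
    have e0 : ENNReal.ofReal (g (y, z) ^ 2) = (‖g (y, z)‖₊ : ℝ≥0∞) ^ 2 := by
      rw [← enorm_eq_nnnorm, Real.enorm_eq_ofReal_abs, ← ENNReal.ofReal_pow (abs_nonneg _), sq_abs]
    rw [e0]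
    refine pow_le_pow_left' ?_ 2
    refine le_trans (enorm_integral_le_lintegral_enorm _) (le_of_eq ?_)
    refine lintegral_congr fun x => ?_
    rw [enorm_eq_nnnorm, nnnorm_mul, ENNReal.coe_mul]
  -- L1 norms of scaled kernels
  have hone : ENNReal.ofReal (1/h') * ENNReal.ofReal h' = 1 := by
    rw [← ENNReal.ofReal_mul (by positivity), one_div, inv_mul_cancel₀ hh'.ne',
      ENNReal.ofReal_one]
  have honeh : ENNReal.ofReal (1/h) * ENNReal.ofReal h = 1 := by
    rw [← ENNReal.ofReal_mul (by positivity), one_div, inv_mul_cancel₀ hh.ne',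
      ENNReal.ofReal_one]
  have hBint : ∀ z : ℝ, ∫⁻ x, B z x = I1 := by
    intro z
    have e : ∀ x : ℝ, B z x
        = ENNReal.ofReal (1/h') * (‖K ((z - x)/h')‖₊ : ℝ≥0∞) := fun x => by
      rw [hBdef]
      simp only [scaledKer]
      rw [nnnorm_mul, ENNReal.coe_mul, ← enorm_eq_nnnorm (1/h'), Real.enorm_eq_ofReal_abs (1/h'),
        abs_of_pos (by positivity)]
    simp_rw [e]
    have m1 : Measurable fun x : ℝ => (‖K ((z - x)/h')‖₊ : ℝ≥0∞) :=
      hGm.comp (by fun_prop)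
    rw [lintegral_const_mul _ m1, lint_sub_div hGm hh' z, ← mul_assoc, hone, one_mul]
  have hBintz : ∀ x : ℝ, ∫⁻ z, B z x = I1 := by
    intro x
    have e : ∀ z : ℝ, B z x
        = ENNReal.ofReal (1/h') * (‖K ((z - x)/h')‖₊ : ℝ≥0∞) := fun z => by
      rw [hBdef]
      simp only [scaledKer]
      rw [nnnorm_mul, ENNReal.coe_mul, ← enorm_eq_nnnorm (1/h'), Real.enorm_eq_ofReal_abs (1/h'),
        abs_of_pos (by positivity)]
    simp_rw [e]
    have m1 : Measurable fun z : ℝ => (‖K ((z - x)/h')‖₊ : ℝ≥0∞) :=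
      hGm.comp (by fun_prop)
    rw [lintegral_const_mul _ m1, lint_div_sub hGm hh' x, ← mul_assoc, hone, one_mul]
  have hAint : ∀ y : ℝ, ∫⁻ x, A y x ^ 2 = ENNReal.ofReal (1/h) * I2 := by
    intro y
    have e : ∀ x : ℝ, A y x ^ 2
        = ENNReal.ofReal (1/h) ^ 2 * ((‖K ((y - x)/h)‖₊ : ℝ≥0∞) ^ 2) := fun x => by
      rw [hAdef]
      simp only [scaledKer]
      rw [nnnorm_mul, ENNReal.coe_mul, ← enorm_eq_nnnorm (1/h), Real.enorm_eq_ofReal_abs (1/h),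
        abs_of_pos (by positivity), mul_pow]
    simp_rw [e]
    have m1 : Measurable fun x : ℝ => (‖K ((y - x)/h)‖₊ : ℝ≥0∞) ^ 2 :=
      (hGm.comp (by fun_prop)).pow_const 2
    rw [lintegral_const_mul _ m1,
      lint_sub_div (G := fun u => (‖K u‖₊ : ℝ≥0∞) ^ 2) (hGm.pow_const 2) hh y]
    calc ENNReal.ofReal (1/h) ^ 2 * (ENNReal.ofReal h * I2)
        = (ENNReal.ofReal (1/h) * ENNReal.ofReal h) * (ENNReal.ofReal (1/h) * I2) := by ring
      _ = ENNReal.ofReal (1/h) * I2 := by rw [honeh, one_mul]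
  have hBν : ∀ x : ℝ, ∫⁻ z, B z x ∂ν ≤ ENNReal.ofReal M * I1 := by
    intro x
    calc ∫⁻ z, B z x ∂ν ≤ ∫⁻ z, B z x ∂(ENNReal.ofReal M • volume) :=
          lintegral_mono' hνM le_rfl
      _ = ENNReal.ofReal M * ∫⁻ z, B z x := lintegral_smul_measure _ _
      _ = ENNReal.ofReal M * I1 := by rw [hBintz x]
  set C : ℝ≥0∞ := ENNReal.ofReal M * ENNReal.ofReal (1/h) * I1 ^ 2 * I2 with hCdef
  have hy : ∀ y : ℝ, ∫⁻ z, ENNReal.ofReal (g (y, z) ^ 2) ∂ν ≤ C := by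
    intro y
    have hinm : Measurable fun z => ∫⁻ x, A y x ^ 2 * B z x := by
      refine Measurable.lintegral_prod_right' (f := fun p : ℝ × ℝ => A y p.2 ^ 2 * B p.1 p.2) ?_
      exact (((hAm y).comp measurable_snd).pow_const 2).mul hBjm
    calc ∫⁻ z, ENNReal.ofReal (g (y, z) ^ 2) ∂ν
        ≤ ∫⁻ z, (∫⁻ x, A y x * B z x) ^ 2 ∂ν := lintegral_mono fun z => hpt y z
      _ ≤ ∫⁻ z, (∫⁻ x, A y x ^ 2 * B z x) * (∫⁻ x, B z x) ∂ν :=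
          lintegral_mono fun z => cs_lintegral _ _ (hAm y) (hBm z)
      _ = ∫⁻ z, (∫⁻ x, A y x ^ 2 * B z x) * I1 ∂ν := by simp_rw [hBint]
      _ = (∫⁻ z, ∫⁻ x, A y x ^ 2 * B z x ∂volume ∂ν) * I1 :=
          lintegral_mul_const _ hinm
      _ = (∫⁻ x, ∫⁻ z, A y x ^ 2 * B z x ∂ν ∂volume) * I1 := by
          rw [lintegral_lintegral_swap]
          exact ((((hAm y).comp measurable_snd).pow_const 2).mul hBjm).aemeasurable
      _ = (∫⁻ x, A y x ^ 2 * ∫⁻ z, B z x ∂ν ∂volume) * I1 := by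
          congr 1
          refine lintegral_congr fun x => ?_
          exact lintegral_const_mul _ ((hker h').comp (measurable_id.sub_const x)).enorm
      _ ≤ (∫⁻ x, A y x ^ 2 * (ENNReal.ofReal M * I1) ∂volume) * I1 :=
          mul_le_mul' (lintegral_mono fun x => mul_le_mul' le_rfl (hBν x)) le_rfl
      _ = ((∫⁻ x, A y x ^ 2) * (ENNReal.ofReal M * I1)) * I1 :=
          congrArg (· * I1) (lintegral_mul_const _ ((hAm y).pow_const 2))
      _ = ((ENNReal.ofReal (1/h) * I2) * (ENNReal.ofReal M * I1)) * I1 := by rw [hAint y]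
      _ = C := by rw [hCdef]; ring
  calc ∫⁻ y, ∫⁻ z, ENNReal.ofReal (g (y, z) ^ 2) ∂ν ∂ν
      ≤ ∫⁻ _, C ∂ν := lintegral_mono hy
    _ = C := by simp
    _ ≤ ENNReal.ofReal ((∫ u, |K u|) ^ 2 * (∫ u, (K u) ^ 2) * M / h) := by
        apply le_of_eq
        rw [hCdef, hI1, hI2,
          ← ENNReal.ofReal_pow (integral_nonneg fun u => abs_nonneg _),
          ← ENNReal.ofReal_mul hM,
          ← ENNReal.ofReal_mul (by positivity),
          ← ENNReal.ofReal_mul (by positivity)]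
        congr 1
        ring

/-- For `K ∈ L¹ ∩ L² ∩ L^∞`, a bounded density `f`, and independent `X, X'`
with density `f`, `E((∫ K_h(X−x) K_{h'}(X'−x) dx)²) ≤ ‖K‖₁² ‖K‖₂² ‖f‖_∞ / h`. -/
theorem stmt_19
    {Ω : Type*} [MeasureSpace Ω] [IsProbabilityMeasure (ℙ : Measure Ω)]
    (X X' : Ω → ℝ) (hX : Measurable X) (hX' : Measurable X')
    (hindep : IndepFun X X' ℙ)
    (f : ℝ → ℝ) (M : ℝ) (hf0 : ∀ y, 0 ≤ f y) (hfM : ∀ y, f y ≤ M)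
    (hdensX : Measure.map X ℙ
      = volume.withDensity (fun y => ENNReal.ofReal (f y)))
    (hdensX' : Measure.map X' ℙ
      = volume.withDensity (fun y => ENNReal.ofReal (f y)))
    (K : ℝ → ℝ) (hK1 : Integrable K) (hK2 : MemLp K 2 volume)
    (hKinf : MemLp K ⊤ volume)
    (h h' : ℝ) (hh : 0 < h) (hh' : 0 < h') :
    ∫ ω, (∫ x, scaledKer K h (X ω - x) * scaledKer K h' (X' ω - x)) ^ 2 ∂ℙ
      ≤ (∫ u, |K u|) ^ 2 * (∫ u, (K u) ^ 2) * M / h := by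
  classical
  have hKsm : AEStronglyMeasurable K volume := hK1.1
  set K' : ℝ → ℝ := hKsm.mk K with hK'def
  have hKK' : K =ᵐ[volume] K' := hKsm.ae_eq_mk
  have hK'm : Measurable K' := hKsm.stronglyMeasurable_mk.measurable
  set ν : Measure ℝ := volume.withDensity (fun y => ENNReal.ofReal (f y)) with hνdef
  have hM : 0 ≤ M := le_trans (hf0 0) (hfM 0)
  have hprob : IsProbabilityMeasure ν := hdensX ▸ Measure.isProbabilityMeasure_map hX.aemeasurable
  have hνM : ν ≤ ENNReal.ofReal M • volume := by
    refine Measure.le_iff.mpr fun s hs => ?_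
    rw [hνdef, withDensity_apply _ hs, Measure.smul_apply, smul_eq_mul]
    calc ∫⁻ y in s, ENNReal.ofReal (f y) ≤ ∫⁻ _ in s, ENNReal.ofReal M :=
          lintegral_mono fun y => ENNReal.ofReal_le_ofReal (hfM y)
      _ = ENNReal.ofReal M * volume s := by rw [setLIntegral_const]
  have hK1' : Integrable K' := hK1.congr hKK'
  have hsq' : Integrable (fun u => K' u ^ 2) :=
    hK2.integrable_sq.congr (hKK'.mono fun u hu => by simp only [hu])
  have e1 : ∫ u, |K u| = ∫ u, |K' u| :=
    integral_congr_ae (hKK'.mono fun u hu => by simp only [hu])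
  have e2 : ∫ u, K u ^ 2 = ∫ u, K' u ^ 2 :=
    integral_congr_ae (hKK'.mono fun u hu => by simp only [hu])
  have hqmp : ∀ (s c : ℝ), 0 < s →
      Measure.QuasiMeasurePreserving (fun x : ℝ => (c - x) / s) volume volume := by
    intro s c hs
    have e : (fun x : ℝ => (c - x) / s) = fun x => (-(1/s)) * x + c / s := by
      funext x; ring
    rw [e]
    exact qmp_affine (neg_ne_zero.mpr (by positivity)) _
  have eg : ∀ y z : ℝ,
      (∫ x, scaledKer K h (y - x) * scaledKer K h' (z - x))
        = ∫ x, scaledKer K' h (y - x) * scaledKer K' h' (z - x) := by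
    intro y z
    apply integral_congr_ae
    have q1 : (fun x => K ((y - x) / h)) =ᵐ[volume] fun x => K' ((y - x) / h) :=
      (hqmp h y hh).ae_eq_comp hKK'
    have q2 : (fun x => K ((z - x) / h')) =ᵐ[volume] fun x => K' ((z - x) / h') :=
      (hqmp h' z hh').ae_eq_comp hKK'
    filter_upwards [q1, q2] with x ex1 ex2
    simp only [scaledKer, ex1, ex2]
  simp only [eg, e1, e2]
  exact core X X' hX hX' hindep ν M hM hνM hdensX hdensX' K' hK'm hK1' hsq' h h' hh hh'
end
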